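/- Let G=(V,E) be a finite simple undirected graph, x:E→[0,1], and let e_1,…,e_m be the edges (with multiplicity, in order) of a closed walk in G. If F⊆{1,…,m} has odd cardinality and Σ_{i∈F}(1−x(e_i)) + Σ_{i∈{1,…,m}∖F} x(e_i) < 1, then there exist a simple cycle C of G and F'⊆C with |F'| odd such that Σ_{e∈F'}(1−x(e)) + Σ_{e∈C∖F'} x(e) < 1. -/

import Mathlib

variable {V : Type*}

/-- `C` is the edge set of a simple cycle of `G`. -/
def IsSimpleCycleEdgeSet [DecidableEq V] (G : SimpleGraph V) (C : Finset (Sym2 V)) : Prop :=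
  ∃ (v : V) (p : G.Walk v v), p.IsCycle ∧ C = p.edges.toFinset

namespace Stmt12Aux

open SimpleGraph List

/-- The cycle-inequality quantity for a list of edges tagged by membership in `F`. -/
noncomputable def Q (x : Sym2 V → ℝ) (L : List (Sym2 V × Bool)) : ℝ :=
  (L.map (fun pr => if pr.2 then 1 - x pr.1 else x pr.1)).sum

lemma Q_append (x : Sym2 V → ℝ) (L1 L2 : List (Sym2 V × Bool)) :
    Q x (L1 ++ L2) = Q x L1 + Q x L2 := by
  simp [Q]

lemma Q_nonneg {G : SimpleGraph V} (x : Sym2 V → ℝ)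
    (hx : ∀ e ∈ G.edgeSet, 0 ≤ x e ∧ x e ≤ 1)
    (L : List (Sym2 V × Bool)) (hL : ∀ pr ∈ L, pr.1 ∈ G.edgeSet) :
    0 ≤ Q x L := by
  apply List.sum_nonneg
  intro a ha
  obtain ⟨pr, hpr, rfl⟩ := List.mem_map.mp ha
  obtain ⟨h0, h1⟩ := hx pr.1 (hL pr hpr)
  by_cases hb : pr.2 <;> simp [hb] <;> linarith

/-- In a walk with nodup support, an edge joining the two endpoints forces length 1. -/
lemma length_eq_one_of_mem_edges {G : SimpleGraph V} {u v : V} (q : G.Walk u v)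
    (hq : q.support.Nodup) (he : s(u, v) ∈ q.edges) : q.length = 1 := by
  cases q with
  | nil => simp at he
  | @cons _ c _ h' r =>
    rw [SimpleGraph.Walk.edges_cons, List.mem_cons] at he
    rcases he with he | he
    · rw [Sym2.eq_iff] at he
      rcases he with ⟨-, rfl⟩ | ⟨rfl, rfl⟩
      · have : r.IsPath := SimpleGraph.Walk.IsPath.mk'
          (by simpa [SimpleGraph.Walk.support_cons] using hq.of_cons)
        rw [SimpleGraph.Walk.isPath_iff_eq_nil] at this
        subst this
        simp
      · exact absurd rfl h'.ne
    · exfalso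
      have hu : u ∈ r.support := SimpleGraph.Walk.fst_mem_support_of_mem_edges r he
      rw [SimpleGraph.Walk.support_cons, List.nodup_cons] at hq
      exact hq.1 hu

/-- Terminal case: the walk is an actual cycle. -/
lemma terminal {G : SimpleGraph V} [DecidableEq V] (x : Sym2 V → ℝ) {v : V}
    (p : G.Walk v v) (hc : p.IsCycle) (L : List (Sym2 V × Bool))
    (hL : L.map Prod.fst = p.edges) (hodd : Odd (L.countP (·.2)))
    (hQ : Q x L < 1) :
    ∃ (C F' : Finset (Sym2 V)), IsSimpleCycleEdgeSet G C ∧ F' ⊆ C ∧ Odd F'.card ∧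
      (∑ e ∈ F', (1 - x e)) + (∑ e ∈ C \ F', x e) < 1 := by
  classical
  have hnd : p.edges.Nodup := hc.edges_nodup
  set Lt := L.filter (·.2) with hLt
  set Lf := L.filter (fun pr => !pr.2) with hLf
  have hperm : (Lt.map Prod.fst ++ Lf.map Prod.fst) ~ p.edges := by
    rw [← List.map_append, ← hL]
    exact (List.filter_append_perm _ L).map Prod.fst
  have hndL : (Lt.map Prod.fst ++ Lf.map Prod.fst).Nodup := hperm.nodup_iff.mpr hnd
  rw [List.nodup_append] at hndL
  obtain ⟨hndt, hndf, hdisj⟩ := hndL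
  refine ⟨p.edges.toFinset, (Lt.map Prod.fst).toFinset, ⟨v, p, hc, rfl⟩, ?_, ?_, ?_⟩
  · intro e he
    rw [List.mem_toFinset] at he ⊢
    exact (hperm.mem_iff).mp (by simp [he])
  · rw [List.toFinset_card_of_nodup hndt, List.length_map]
    simpa [hLt, List.countP_eq_length_filter] using hodd
  · have hsdiff : p.edges.toFinset \ (Lt.map Prod.fst).toFinset
        = (Lf.map Prod.fst).toFinset := by
      ext e
      simp only [Finset.mem_sdiff, List.mem_toFinset]
      constructor
      · rintro ⟨hin, hnot⟩
        rcases (List.mem_append.mp ((hperm.mem_iff).mpr hin)).symm with h | h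
        · rcases List.mem_map.mp h with ⟨pr, hpr, rfl⟩
          exact List.mem_map_of_mem hpr
        · exact absurd h hnot
      · intro h
        refine ⟨(hperm.mem_iff).mp (by simp [h]), fun h' => hdisj _ h' _ h rfl⟩
    rw [hsdiff, List.sum_toFinset _ hndt, List.sum_toFinset _ hndf]
    have hQt : (Lt.map Prod.fst |>.map (fun e => 1 - x e)).sum = Q x Lt := by
      rw [List.map_map, Q]
      congr 1
      apply List.map_congr_left
      intro pr hpr
      have : pr.2 = true := by simpa using (List.mem_filter.mp hpr).2
      simp [this]
    have hQf : (Lf.map Prod.fst |>.map (fun e => x e)).sum = Q x Lf := by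
      rw [List.map_map, Q]
      congr 1
      apply List.map_congr_left
      intro pr hpr
      have : pr.2 = false := by simpa using (List.mem_filter.mp hpr).2
      simp [this]
    have hQsum : Q x Lt + Q x Lf = Q x L := by
      rw [← Q_append]
      simp only [Q]
      exact ((List.filter_append_perm _ L).map _).sum_eq
    rw [hQt, hQf]
    linarith

lemma main {G : SimpleGraph V} [DecidableEq V] (x : Sym2 V → ℝ)
    (hx : ∀ e ∈ G.edgeSet, 0 ≤ x e ∧ x e ≤ 1) :
    ∀ (n : ℕ) (v : V) (p : G.Walk v v) (L : List (Sym2 V × Bool)),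
      p.length ≤ n → L.map Prod.fst = p.edges → Odd (L.countP (·.2)) → Q x L < 1 →
      ∃ (C F' : Finset (Sym2 V)), IsSimpleCycleEdgeSet G C ∧ F' ⊆ C ∧ Odd F'.card ∧
        (∑ e ∈ F', (1 - x e)) + (∑ e ∈ C \ F', x e) < 1 := by
  intro n
  induction n with
  | zero =>
    intro v p L hlen hL hodd hQ
    have : L = [] := by
      have hl0 : p.length = 0 := Nat.le_zero.mp hlen
      have := congrArg List.length hL
      simpa [SimpleGraph.Walk.length_edges, hl0] using this
    subst this
    simp at hodd
  | succ n IH =>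
    intro v p L hlen hL hodd hQ
    have hedgeset : ∀ pr ∈ L, pr.1 ∈ G.edgeSet := by
      intro pr hpr
      exact p.edges_subset_edgeSet (hL ▸ List.mem_map_of_mem (f := Prod.fst) hpr)
    cases p with
    | nil =>
      have : L = [] := by
        have := congrArg List.length hL
        simpa using this
      subst this
      simp at hodd
    | @cons _ w _ h q =>
      by_cases hnd : q.support.Nodup
      · by_cases hse : s(v, w) ∈ q.edges
        · -- backtracking v-w-v walk: Q = 1, contradiction
          exfalso
          have hq1 : q.length = 1 :=
            length_eq_one_of_mem_edges q hnd (by rwa [Sym2.eq_swap])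
          have hqe : q.edges = [s(v, w)] := by
            have hlen1 : q.edges.length = 1 := by rw [SimpleGraph.Walk.length_edges, hq1]
            match q.edges, hlen1, hse with
            | [e], _, hse => rw [(List.mem_singleton.mp hse).symm]
          have hLe : L.map Prod.fst = [s(v, w), s(v, w)] := by
            rw [hL, SimpleGraph.Walk.edges_cons, hqe]
          match L, hLe with
          | [(e₁, b₁), (e₂, b₂)], hLe =>
            simp only [List.map_cons, List.map_nil, List.cons.injEq] at hLe
            obtain ⟨rfl, rfl, -⟩ := hLe
            cases b₁ <;> cases b₂ <;>
              simp [Q, Nat.odd_iff] at hodd hQ <;> linarith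
        · -- it is a cycle
          have hc : (SimpleGraph.Walk.cons h q).IsCycle :=
            (SimpleGraph.Walk.cons_isCycle_iff q h).mpr
              ⟨SimpleGraph.Walk.IsPath.mk' hnd, hse⟩
          exact terminal x _ hc L hL hodd hQ
      · -- find a repeated vertex and split
        obtain ⟨a, hdup⟩ := List.exists_duplicate_iff_not_nodup.mpr hnd
        have hcount : 2 ≤ q.support.count a := List.duplicate_iff_two_le_count.mp hdup
        have ha : a ∈ q.support := hdup.mem
        have hspec := q.take_spec ha
        have hcount1 : (q.takeUntil a ha).support.count a = 1 :=
          q.count_support_takeUntil_eq_one ha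
        have hmem2 : a ∈ (q.dropUntil a ha).support.tail := by
          have := congrArg (fun (r : G.Walk w v) => r.support.count a) hspec
          simp only [SimpleGraph.Walk.support_append, List.count_append, hcount1] at this
          have : 1 + ((q.dropUntil a ha).support.tail.count a) = q.support.count a := this
          have h1 : 1 ≤ (q.dropUntil a ha).support.tail.count a := by omega
          exact List.count_pos_iff.mp (by omega)
        have hnonnil : ¬ (q.dropUntil a ha).Nil := by
          intro hnil
          rw [SimpleGraph.Walk.nil_iff_support_eq] at hnil
          rw [hnil] at hmem2
          simp at hmem2
        obtain ⟨b, h2, r, hq2⟩ := SimpleGraph.Walk.not_nil_iff.mp hnonnil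
        rw [hq2] at hmem2 hspec
        have hmem3 : a ∈ r.support := by
          simpa [SimpleGraph.Walk.support_cons] using hmem2
        have hrspec := r.take_spec hmem3
        set q1 := q.takeUntil a ha with hq1def
        set r1 := r.takeUntil a hmem3 with hr1def
        set r2 := r.dropUntil a hmem3 with hr2def
        -- p.edges = (s(v,w) :: q1.edges) ++ ((s(a,b) :: r1.edges) ++ r2.edges)
        have hedges : (SimpleGraph.Walk.cons h q).edges
            = (s(v, w) :: q1.edges) ++ ((s(a, b) :: r1.edges) ++ r2.edges) := by
          conv_lhs => rw [← hspec]
          rw [← hrspec]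
          simp [SimpleGraph.Walk.edges_append, SimpleGraph.Walk.edges_cons]
        set E1 : List (Sym2 V) := s(v, w) :: q1.edges with hE1
        set E2 : List (Sym2 V) := s(a, b) :: r1.edges with hE2
        set L1 := L.take E1.length with hL1
        set L' := L.drop E1.length with hL'def
        set L2 := L'.take E2.length with hL2
        set L3 := L'.drop E2.length with hL3
        have hLsplit : L = L1 ++ (L2 ++ L3) := by
          rw [hL1, hL2, hL3, hL'def, List.take_append_drop, List.take_append_drop]
        have hmap1 : L1.map Prod.fst = E1 := by
          rw [hL1, List.map_take, hL, hedges]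
          exact List.take_left
        have hmap' : L'.map Prod.fst = E2 ++ r2.edges := by
          rw [hL'def, List.map_drop, hL, hedges]
          exact List.drop_left
        have hmap2 : L2.map Prod.fst = E2 := by
          rw [hL2, List.map_take, hmap']
          exact List.take_left
        have hmap3 : L3.map Prod.fst = r2.edges := by
          rw [hL3, List.map_drop, hmap']
          exact List.drop_left
        -- lengths
        have hlen1 : q1.length + ((r1.length + r2.length) + 1) = q.length := by
          have := congrArg SimpleGraph.Walk.length hspec
          rw [SimpleGraph.Walk.length_append, SimpleGraph.Walk.length_cons] at this
          have := congrArg SimpleGraph.Walk.length hrspec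
          rw [SimpleGraph.Walk.length_append] at this
          omega
        have hplen : (SimpleGraph.Walk.cons h q).length = q.length + 1 :=
          SimpleGraph.Walk.length_cons _ _
        -- nonnegativity of the three parts
        have hsub1 : ∀ pr ∈ L1, pr.1 ∈ G.edgeSet := fun pr hpr =>
          hedgeset pr (List.mem_of_mem_take hpr)
        have hsub2 : ∀ pr ∈ L2, pr.1 ∈ G.edgeSet := fun pr hpr =>
          hedgeset pr (List.mem_of_mem_drop (List.mem_of_mem_take hpr))
        have hsub3 : ∀ pr ∈ L3, pr.1 ∈ G.edgeSet := fun pr hpr =>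
          hedgeset pr (List.mem_of_mem_drop (List.mem_of_mem_drop hpr))
        have hQ1 : 0 ≤ Q x L1 := Q_nonneg x hx L1 hsub1
        have hQ2 : 0 ≤ Q x L2 := Q_nonneg x hx L2 hsub2
        have hQ3 : 0 ≤ Q x L3 := Q_nonneg x hx L3 hsub3
        have hQsplit : Q x L = Q x L1 + (Q x L2 + Q x L3) := by
          rw [hLsplit, Q_append, Q_append]
        have hcsplit : L.countP (·.2) = L1.countP (·.2) + (L2.countP (·.2) + L3.countP (·.2)) := by
          rw [hLsplit, List.countP_append, List.countP_append]
        have hc' : Odd (L1.countP (·.2) + (L2.countP (·.2) + L3.countP (·.2))) := by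
          rw [← hcsplit]; exact hodd
        by_cases hpar : Odd (L2.countP (·.2))
        · -- recurse into middle closed walk cons h2 r1 : Walk a a
          apply IH a (SimpleGraph.Walk.cons h2 r1) L2
          · rw [SimpleGraph.Walk.length_cons]
            omega
          · rw [hmap2, hE2, SimpleGraph.Walk.edges_cons]
          · exact hpar
          · rw [hQsplit] at hQ; linarith
        · -- recurse into outer closed walk (cons h q1) ++ r2 : Walk v v
          apply IH v ((SimpleGraph.Walk.cons h q1).append r2) (L1 ++ L3)
          · rw [SimpleGraph.Walk.length_append, SimpleGraph.Walk.length_cons]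
            omega
          · rw [List.map_append, hmap1, hmap3, SimpleGraph.Walk.edges_append,
              SimpleGraph.Walk.edges_cons]
          · rw [List.countP_append]
            have he2 : (L2.countP (·.2)) % 2 = 0 := by
              rcases Nat.even_or_odd (L2.countP (·.2)) with he | ho
              · exact Nat.even_iff.mp he
              · exact absurd ho hpar
            rw [Nat.odd_iff] at hc' ⊢
            omega
          · rw [Q_append]
            rw [hQsplit] at hQ
            linarith

end Stmt12Aux

/-- If `x : E → [0,1]` violates a cycle inequality along a closed walk (edges counted
with multiplicity, odd index set `F`), then `x` violates the cycle inequality of some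
simple cycle of `G`. -/
theorem stmt12 [Fintype V] [DecidableEq V] (G : SimpleGraph V) (x : Sym2 V → ℝ)
    (hx : ∀ e ∈ G.edgeSet, 0 ≤ x e ∧ x e ≤ 1)
    (v : V) (p : G.Walk v v)
    (F : Finset (Fin p.edges.length)) (hodd : Odd F.card)
    (hviol : (∑ i ∈ F, (1 - x (p.edges.get i))) + (∑ i ∈ Fᶜ, x (p.edges.get i)) < 1) :
    ∃ (C F' : Finset (Sym2 V)), IsSimpleCycleEdgeSet G C ∧ F' ⊆ C ∧ Odd F'.card ∧
      (∑ e ∈ F', (1 - x e)) + (∑ e ∈ C \ F', x e) < 1 := by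
  classical
  set L : List (Sym2 V × Bool) :=
    (List.finRange p.edges.length).map (fun i => (p.edges.get i, decide (i ∈ F))) with hLdef
  have hmap : L.map Prod.fst = p.edges := by
    rw [hLdef, List.map_map]
    exact List.map_get_finRange p.edges
  have hcount : L.countP (·.2) = F.card := by
    rw [hLdef, List.countP_map]
    have hc2 : ((fun pr : Sym2 V × Bool => pr.2) ∘ fun i => (p.edges.get i, decide (i ∈ F)))
        = fun i : Fin p.edges.length => decide (i ∈ F) := by
      funext i; simp
    rw [hc2]
    have hnodup : ((List.finRange p.edges.length).filter
        (fun i => decide (i ∈ F))).Nodup := (List.nodup_finRange _).filter _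
    have htf : ((List.finRange p.edges.length).filter (fun i => decide (i ∈ F))).toFinset
        = Finset.univ.filter (fun i => i ∈ F) := by
      ext i; simp
    rw [List.countP_eq_length_filter, ← List.toFinset_card_of_nodup hnodup, htf,
      Finset.filter_univ_mem]
  have hQeq : Stmt12Aux.Q x L
      = (∑ i ∈ F, (1 - x (p.edges.get i))) + (∑ i ∈ Fᶜ, x (p.edges.get i)) := by
    rw [Stmt12Aux.Q, hLdef, List.map_map]
    have hc2 : ((fun pr : Sym2 V × Bool => if pr.2 then 1 - x pr.1 else x pr.1)
          ∘ fun i => (p.edges.get i, decide (i ∈ F)))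
        = fun i : Fin p.edges.length =>
            if i ∈ F then 1 - x (p.edges.get i) else x (p.edges.get i) := by
      funext i
      by_cases hi : i ∈ F <;> simp [hi]
    rw [hc2, ← Fin.sum_univ_def]
    rw [← Finset.sum_filter_add_sum_filter_not Finset.univ (fun i => i ∈ F)]
    congr 1
    · rw [Finset.filter_univ_mem]
      apply Finset.sum_congr rfl
      intro i hi
      simp [hi]
    · have hfc : Finset.univ.filter (fun i => ¬ i ∈ F) = Fᶜ := by
        ext i; simp
      rw [hfc]
      apply Finset.sum_congr rfl
      intro i hi
      simp only [Finset.mem_compl] at hi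
      simp [hi]
  apply Stmt12Aux.main x hx p.length v p L le_rfl hmap
  · rw [hcount]; exact hodd
  · rw [hQeq]; exact hviol
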